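/- If the baseline policy π_base is an optimal recommendation at some adherence level θ₀ ∈ [0,1] — i.e., R(π_eff(π_base, θ₀)) ≥ R(π_eff(π, θ₀)) for all stationary policies π — then π_base is an optimal recommendation at every θ ∈ [0, θ₀]. -/

import Mathlib

open scoped BigOperators
open Matrix

/-- Markov matrix induced by a stationary policy. -/
noncomputable def mdpM {S A : Type*} [Fintype S] [Fintype A]
    (P : S → A → S → ℝ) (π : S → A → ℝ) : Matrix S S ℝ :=
  fun s s' => ∑ a, π s a * P s a s'

/-- Expected instantaneous reward under a stationary policy. -/
noncomputable def mdpr {S A : Type*} [Fintype S] [Fintype A]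
    (P : S → A → S → ℝ) (r : S → A → S → ℝ) (π : S → A → ℝ) : S → ℝ :=
  fun s => ∑ a, π s a * ∑ s', P s a s' * r s a s'

/-- Expected discounted return of a stationary policy from initial distribution `p0`. -/
noncomputable def Ret {S A : Type*} [Fintype S] [Fintype A] [DecidableEq S]
    (lam : ℝ) (P : S → A → S → ℝ) (r : S → A → S → ℝ) (p0 : S → ℝ)
    (π : S → A → ℝ) : ℝ :=
  ∑' t : ℕ, lam ^ t * ∑ s, p0 s * ((mdpM P π ^ t) *ᵥ (mdpr P r π)) s

/-- If the baseline policy is an optimal recommendation at adherence level `θ₀`, then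
it is an optimal recommendation at every adherence level `θ ∈ [0, θ₀]`. -/
theorem stmt18 {S A : Type*} [Fintype S] [Fintype A] [Nonempty S] [Nonempty A]
    [DecidableEq S]
    (lam : ℝ) (hlam : lam ∈ Set.Ico (0:ℝ) 1)
    (P : S → A → S → ℝ) (hP : ∀ s a, P s a ∈ stdSimplex ℝ S)
    (r : S → A → S → ℝ)
    (p0 : S → ℝ) (hp0 : p0 ∈ stdSimplex ℝ S)
    (πb : S → A → ℝ) (hπb : ∀ s, πb s ∈ stdSimplex ℝ A)
    (θ₀ : ℝ) (hθ₀ : θ₀ ∈ Set.Icc (0:ℝ) 1)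
    (hopt : ∀ π : S → A → ℝ, (∀ s, π s ∈ stdSimplex ℝ A) →
      Ret lam P r p0 (fun s a => θ₀ * π s a + (1 - θ₀) * πb s a)
        ≤ Ret lam P r p0 (fun s a => θ₀ * πb s a + (1 - θ₀) * πb s a)) :
    ∀ θ ∈ Set.Icc (0:ℝ) θ₀, ∀ π : S → A → ℝ, (∀ s, π s ∈ stdSimplex ℝ A) →
      Ret lam P r p0 (fun s a => θ * π s a + (1 - θ) * πb s a)
        ≤ Ret lam P r p0 (fun s a => θ * πb s a + (1 - θ) * πb s a) := by

  intro θ hθ π hπ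
  rcases hθ with ⟨hθ0, hθt⟩
  -- both right-hand sides are just πb
  have hmix : (fun s a => θ * πb s a + (1 - θ) * πb s a) = fun s a => πb s a := by
    funext s a; ring
  rcases eq_or_lt_of_le (le_trans hθ0 hθt) with h0 | h0
  · -- θ₀ = 0, hence θ = 0
    have hθ : θ = 0 := le_antisymm (h0 ▸ hθt) hθ0
    subst hθ
    have : (fun s a => (0:ℝ) * π s a + (1 - 0) * πb s a)
        = fun s a => (0:ℝ) * πb s a + (1 - 0) * πb s a := by
      funext s a; ring
    rw [this]
  · -- θ₀ > 0
    set t : ℝ := θ / θ₀ with ht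
    have ht0 : 0 ≤ t := div_nonneg hθ0 (le_of_lt h0)
    have ht1 : t ≤ 1 := (div_le_one h0).mpr hθt
    have hπ' : ∀ s, (fun a => t * π s a + (1 - t) * πb s a) ∈ stdSimplex ℝ A := by
      intro s
      exact convex_stdSimplex ℝ A (hπ s) (hπb s) ht0 (by linarith) (by ring)
    have key := hopt (fun s a => t * π s a + (1 - t) * πb s a) hπ'
    have heq : (fun s a => θ₀ * (t * π s a + (1 - t) * πb s a) + (1 - θ₀) * πb s a)
        = fun s a => θ * π s a + (1 - θ) * πb s a := by
      funext s a
      have : θ₀ * t = θ := by rw [ht, mul_div_assoc']; exact mul_div_cancel_left₀ θ h0.ne'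
      linear_combination (π s a - πb s a) * this
    have heq2 : (fun s a => θ₀ * πb s a + (1 - θ₀) * πb s a)
        = fun s a => θ * πb s a + (1 - θ) * πb s a := by
      funext s a; ring
    rw [heq, heq2] at key
    exact key
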